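/- arXiv:2012.07200 — 2 statements merged into one kernel-verified Lean document; each statement's English description precedes it below -/
import Mathlib

section
/- Let P be a finite poset on n elements and let φ be a linear functional on g_A(P); write c_{ij} = φ(E_{ij}) for each strict relation i ≺ j. Suppose the simple graph T on vertex set P whose edges are the pairs {i,j} with i ≺ j and c_{ij} ≠ 0 is a tree (connected and acyclic, spanning all of P). Then every L ∈ ker B_φ (i.e., every L ∈ g_A(P) with φ([x,L]) = 0 for all x ∈ g_A(P)) has vanishing (i,j) entry for every strict relation i ≺ j with c_{ij} ≠ 0. -/
open Matrix

attribute [local instance 100] LieRing.ofAssociativeRing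

/-- A finite poset on `Fin n`, compatible with the natural order on `Fin n`. -/
structure FinPoset (n : ℕ) where
  le : Fin n → Fin n → Prop
  le_refl : ∀ i, le i i
  le_antisymm : ∀ i j, le i j → le j i → i = j
  le_trans : ∀ i j k, le i j → le j k → le i k
  le_compat : ∀ i j, le i j → i ≤ j

namespace FinPoset

/-- Strict relation of the poset. -/
def lt {n : ℕ} (P : FinPoset n) (i j : Fin n) : Prop := P.le i j ∧ i ≠ j

end FinPoset

/-- The type-A Lie poset algebra: trace-zero matrices supported on the relations of `P`. -/
def gA {n : ℕ} (P : FinPoset n) : LieSubalgebra ℂ (Matrix (Fin n) (Fin n) ℂ) where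
  carrier := {M | Matrix.trace M = 0 ∧ ∀ i j, ¬ P.le i j → M i j = 0}
  add_mem' := by
    rintro a b ⟨ha1, ha2⟩ ⟨hb1, hb2⟩
    exact ⟨by simp [Matrix.trace_add, ha1, hb1],
      fun i j h => by simp [Matrix.add_apply, ha2 i j h, hb2 i j h]⟩
  zero_mem' := ⟨Matrix.trace_zero _ _, fun _ _ _ => rfl⟩
  smul_mem' := by
    rintro c a ⟨ha1, ha2⟩
    exact ⟨by simp [Matrix.trace_smul, ha1],
      fun i j h => by simp [Matrix.smul_apply, ha2 i j h]⟩
  lie_mem' := by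
    rintro a b ⟨ha1, ha2⟩ ⟨hb1, hb2⟩
    refine ⟨by simp [Ring.lie_def, Matrix.trace_sub, Matrix.trace_mul_comm a b], ?_⟩
    intro i j h
    simp only [Ring.lie_def, Matrix.sub_apply, Matrix.mul_apply]
    rw [Finset.sum_eq_zero, Finset.sum_eq_zero, sub_zero]
    · intro k _
      by_cases hbk : P.le i k
      · have : ¬ P.le k j := fun hkj => h (P.le_trans i k j hbk hkj)
        simp [ha2 k j this]
      · simp [hb2 i k hbk]
    · intro k _
      by_cases hak : P.le i k
      · have : ¬ P.le k j := fun hkj => h (P.le_trans i k j hak hkj)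
        simp [hb2 k j this]
      · simp [ha2 i k hak]

/-- The extended skew-symmetric matrix `\widehat{B}_φ` attached to an ordered
basis-like family `E` and a functional `φ`. -/
def hatB {g : Type*} [LieRing g] [LieAlgebra ℂ g] {m : ℕ}
    (E : Fin m → g) (φ : Module.Dual ℂ g) : Matrix (Fin (m + 1)) (Fin (m + 1)) ℂ :=
  Matrix.of fun i j =>
    Fin.cases
      (Fin.cases 0 (fun j' => φ (E j')) j)
      (fun i' => Fin.cases (-(φ (E i'))) (fun j' => φ ⁅E i', E j'⁆) j)
      i

/-- `φ` is a contact form on `g`: `g` has odd dimension `2k+1` and the matrix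
`\widehat{B}_φ` with respect to a basis is nonsingular. -/
def IsContactForm (g : Type*) [LieRing g] [LieAlgebra ℂ g] (φ : Module.Dual ℂ g) : Prop :=
  ∃ (k : ℕ) (E : Module.Basis (Fin (2 * k + 1)) ℂ g), (hatB (⇑E) φ).det ≠ 0

/-- `g` is a contact Lie algebra. -/
def IsContact (g : Type*) [LieRing g] [LieAlgebra ℂ g] : Prop :=
  ∃ φ : Module.Dual ℂ g, IsContactForm g φ

/-- The kernel of the Kirillov form `B_φ(x,y) = φ⁅x,y⁆`. -/
def kerB {g : Type*} [LieRing g] [LieAlgebra ℂ g] (φ : Module.Dual ℂ g) : Submodule ℂ g where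
  carrier := {x | ∀ y, φ ⁅x, y⁆ = 0}
  add_mem' := by intro a b ha hb; intro y; simp [add_lie, ha y, hb y]
  zero_mem' := by intro y; simp
  smul_mem' := by intro c x hx; intro y; simp [smul_lie, hx y]

/-- The index of a Lie algebra: the minimal dimension of `ker B_φ`. -/
noncomputable def lieIndex (g : Type*) [LieRing g] [LieAlgebra ℂ g] : ℕ :=
  sInf {d | ∃ φ : Module.Dual ℂ g, Module.finrank ℂ (kerB φ) = d}

/-- The Hasse diagram of `P` as a simple graph on `Fin n`. -/
def hasse {n : ℕ} (P : FinPoset n) : SimpleGraph (Fin n) :=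
  SimpleGraph.fromRel (fun i j => P.lt i j ∧ ∀ k, ¬ (P.lt i k ∧ P.lt k j))

/-- The Hasse diagram of the subposet of `P` induced on `S`. -/
def hasseOn {n : ℕ} (P : FinPoset n) (S : Set (Fin n)) : SimpleGraph S :=
  SimpleGraph.fromRel (fun i j => P.lt i j ∧ ∀ k : S, ¬ (P.lt i k ∧ P.lt k j))

/-- The set of extremal (minimal or maximal) elements of `P`. -/
def extSet {n : ℕ} (P : FinPoset n) : Set (Fin n) :=
  {i | (∀ j, ¬ P.lt j i) ∨ (∀ j, ¬ P.lt i j)}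

/-- The extremal elements of the subposet of `P` induced on `S`. -/
def extIn {n : ℕ} (P : FinPoset n) (S : Set (Fin n)) : Set (Fin n) :=
  {i | i ∈ S ∧ ((∀ j ∈ S, ¬ P.lt j i) ∨ (∀ j ∈ S, ¬ P.lt i j))}

/-- The set of elements comparable to `i` (underlying set of `P^i`). -/
def cone {n : ℕ} (P : FinPoset n) (i : Fin n) : Set (Fin n) :=
  {j | P.le j i ∨ P.le i j}

/-- `D(P,i)`: the number of elements strictly below `i`. -/
noncomputable def downDeg {n : ℕ} (P : FinPoset n) (i : Fin n) : ℕ :=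
  Set.ncard {j | P.lt j i}

/-- `U(P,i)`: the number of elements strictly above `i`. -/
noncomputable def upDeg {n : ℕ} (P : FinPoset n) (i : Fin n) : ℕ :=
  Set.ncard {j | P.lt i j}

/-- `P` has a chain of cardinality `m`. -/
def hasChain {n : ℕ} (P : FinPoset n) (m : ℕ) : Prop :=
  ∃ s : Finset (Fin n), s.card = m ∧ ∀ i ∈ s, ∀ j ∈ s, P.le i j ∨ P.le j i

/-- `P` has height exactly `h`: it has a chain of cardinality `h+1` but none of
cardinality `h+2`. -/
def heightEq {n : ℕ} (P : FinPoset n) (h : ℕ) : Prop :=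
  hasChain P (h + 1) ∧ ¬ hasChain P (h + 2)

/-- The matrix unit `E_{ij}` belongs to `g_A(P)` whenever `i ≺ j`. -/
theorem stdBasisMatrix_mem_gA {n : ℕ} (P : FinPoset n) {i j : Fin n} (h : P.lt i j) :
    Matrix.single i j 1 ∈ gA P := by
  constructor
  · exact Matrix.trace_single_eq_of_ne i j (1 : ℂ) h.2
  · intro a b hab
    by_cases hia : i = a
    · by_cases hjb : j = b
      · exact absurd (hia ▸ hjb ▸ h.1) hab
      · simp [Matrix.single, hjb]
    · simp [Matrix.single, hia]

/-- if the directed graph of the functional `φ` (edges: strict relations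
`i ≺ j` with `φ(E_{ij}) ≠ 0`) is a spanning tree, then every `L ∈ ker B_φ` has vanishing
`(i,j)` entry for every strict relation `i ≺ j` with `φ(E_{ij}) ≠ 0`. -/
theorem stmt13 {n : ℕ} (P : FinPoset n) (φ : Module.Dual ℂ ↥(gA P))
    (hT : (SimpleGraph.fromRel (fun i j => ∃ h : P.lt i j,
        φ ⟨Matrix.single i j 1, stdBasisMatrix_mem_gA P h⟩ ≠ 0)).IsTree) :
    ∀ L : ↥(gA P), (∀ x : ↥(gA P), φ ⁅x, L⁆ = 0) →
      ∀ i j : Fin n, ∀ h : P.lt i j,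
        φ ⟨Matrix.single i j 1, stdBasisMatrix_mem_gA P h⟩ ≠ 0 →
        (L : Matrix (Fin n) (Fin n) ℂ) i j = 0 := by
  classical
  intro L hL i j hij hc
  -- notation
  set T := SimpleGraph.fromRel (fun i j => ∃ h : P.lt i j,
      φ ⟨Matrix.single i j 1, stdBasisMatrix_mem_gA P h⟩ ≠ 0) with hTdef
  -- the element E_{ab} of gA P (or 0)
  set Eelt : Fin n → Fin n → ↥(gA P) := fun a b =>
    if h : P.lt a b then ⟨Matrix.single a b 1, stdBasisMatrix_mem_gA P h⟩ else 0
    with hEelt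
  set c : Fin n → Fin n → ℂ := fun a b => φ (Eelt a b) with hcdef
  have hcij : c i j ≠ 0 := by
    have : Eelt i j = ⟨Matrix.single i j 1, stdBasisMatrix_mem_gA P hij⟩ := by
      simp [hEelt, hij]
    show φ (Eelt i j) ≠ 0
    rw [this]; exact hc
  have hclt : ∀ a b, c a b ≠ 0 → P.lt a b := by
    intro a b hab
    by_contra h
    apply hab
    simp [hcdef, hEelt, h]
  -- the bridge
  have hadjT : T.Adj i j := by
    rw [hTdef, SimpleGraph.fromRel_adj]
    exact ⟨hij.2, Or.inl ⟨hij, hc⟩⟩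
  have hbridge : ¬ (T \ SimpleGraph.fromEdgeSet {s(i, j)}).Reachable i j := by
    have hb := (SimpleGraph.isAcyclic_iff_forall_adj_isBridge.mp hT.2) hadjT
    exact SimpleGraph.isBridge_iff.mp hb
  set G' := T.deleteEdges {s(i, j)} with hG'
  have hG'eq : G' = T \ SimpleGraph.fromEdgeSet {s(i, j)} := rfl
  set S : Finset (Fin n) := Finset.univ.filter (fun v => G'.Reachable i v) with hS
  have hiS : i ∈ S :=
    Finset.mem_filter.mpr ⟨Finset.mem_univ i, SimpleGraph.Reachable.refl i⟩
  have hjS : j ∉ S := by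
    simp only [hS, Finset.mem_filter, Finset.mem_univ, true_and]
    rw [hG'eq]; exact hbridge
  have hn : (n : ℂ) ≠ 0 := by
    have : n ≠ 0 := Fin.pos i |>.ne'
    exact_mod_cast this
  set χ : Fin n → ℂ := fun v => if v ∈ S then 1 else 0 with hχ
  set d : Fin n → ℂ := fun v => χ v - (S.card : ℂ) / (n : ℂ) with hd
  -- the diagonal matrix
  set D : Matrix (Fin n) (Fin n) ℂ := Matrix.diagonal d with hD
  have hDmem : D ∈ gA P := by
    constructor
    · rw [hD, Matrix.trace_diagonal]
      have h1 : ∑ v, χ v = (S.card : ℂ) := by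
        rw [hχ]
        rw [Finset.sum_ite_mem, Finset.univ_inter, Finset.sum_const, nsmul_eq_mul, mul_one]
      have h2 : ∑ v : Fin n, (S.card : ℂ) / (n : ℂ) = (S.card : ℂ) := by
        rw [Finset.sum_const, Finset.card_univ, Fintype.card_fin, nsmul_eq_mul,
          mul_div_cancel₀ _ hn]
      simp only [hd, Finset.sum_sub_distrib, h1, h2, sub_self]
    · intro a b hab
      have : a ≠ b := fun h => hab (h ▸ P.le_refl a)
      rw [hD, Matrix.diagonal_apply_ne _ this]
  -- the key identity: ⁅D, L⁆ as a sum of matrix units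
  have hkey : ⁅(⟨D, hDmem⟩ : ↥(gA P)), L⁆
      = ∑ a : Fin n, ∑ b : Fin n, ((d a - d b) * (L : Matrix (Fin n) (Fin n) ℂ) a b) • Eelt a b := by
    apply Subtype.ext
    push_cast [AddSubmonoidClass.coe_finset_sum]
    ext x y
    have hcoesmul : ∀ (r : ℂ) (v : ↥(gA P)),
        ((r • v : ↥(gA P)) : Matrix (Fin n) (Fin n) ℂ) = r • (v : Matrix (Fin n) (Fin n) ℂ) :=
      fun _ _ => rfl
    simp only [Matrix.sum_apply, hcoesmul, Matrix.smul_apply, smul_eq_mul]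
    have hterm : ∀ a b : Fin n,
        ((d a - d b) * (L : Matrix (Fin n) (Fin n) ℂ) a b) * ((Eelt a b : Matrix (Fin n) (Fin n) ℂ)) x y
        = if x = a then (if y = b then
            ((d x - d y) * (L : Matrix (Fin n) (Fin n) ℂ) x y) * (if P.lt x y then 1 else 0) else 0) else 0 := by
      intro a b
      by_cases hxa : x = a
      · by_cases hyb : y = b
        · subst hxa; subst hyb
          simp only [if_pos rfl, hEelt]
          split
          · next h => simp [Matrix.single]
          · next h => simp
        · simp only [if_pos hxa, if_neg hyb, hEelt]
          split
          · next h =>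
            have hz : (Matrix.single a b (1:ℂ)) x y = 0 := by
              simp only [Matrix.single, Matrix.of_apply]
              exact if_neg (fun hh => hyb hh.2.symm)
            simp [hz]
          · next h => simp
      · simp only [if_neg hxa, hEelt]
        split
        · next h =>
          have hz : (Matrix.single a b (1:ℂ)) x y = 0 := by
            simp only [Matrix.single, Matrix.of_apply]
            exact if_neg (fun hh => hxa hh.1.symm)
          simp [hz]
        · next h => simp
    simp only [hterm]
    rw [Finset.sum_eq_single_of_mem x (Finset.mem_univ x)
      (fun a _ ha => Finset.sum_eq_zero fun b _ => by
        rw [if_neg (fun h => ha h.symm)])]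
    rw [Finset.sum_eq_single_of_mem y (Finset.mem_univ y)
      (fun b _ hb => by rw [if_pos rfl, if_neg (fun h => hb h.symm)])]
    rw [if_pos rfl, if_pos rfl]
    -- LHS : ⁅D, L⁆ x y
    have hlie : (⁅D, (L : Matrix (Fin n) (Fin n) ℂ)⁆ : Matrix (Fin n) (Fin n) ℂ) x y
        = d x * (L : Matrix (Fin n) (Fin n) ℂ) x y - (L : Matrix (Fin n) (Fin n) ℂ) x y * d y := by
      simp [Ring.lie_def, hD, Matrix.sub_apply, Matrix.diagonal_mul, Matrix.mul_diagonal]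
    rw [hlie]
    by_cases hlt : P.lt x y
    · rw [if_pos hlt]; ring
    · rw [if_neg hlt, mul_zero]
      by_cases hxy : x = y
      · subst hxy; ring
      · have hle : ¬ P.le x y := fun h => hlt ⟨h, hxy⟩
        rw [L.2.2 x y hle]; ring
  -- apply φ
  have h0 : (0 : ℂ) = ∑ a : Fin n, ∑ b : Fin n,
      (d a - d b) * ((L : Matrix (Fin n) (Fin n) ℂ) a b * c a b) := by
    calc (0:ℂ) = φ ⁅(⟨D, hDmem⟩ : ↥(gA P)), L⁆ := (hL _).symm
    _ = ∑ a : Fin n, ∑ b : Fin n,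
        (d a - d b) * ((L : Matrix (Fin n) (Fin n) ℂ) a b * c a b) := by
      rw [hkey, map_sum]
      refine Finset.sum_congr rfl fun a _ => ?_
      rw [map_sum]
      refine Finset.sum_congr rfl fun b _ => ?_
      rw [_root_.map_smul, smul_eq_mul]
      exact mul_assoc _ _ _
  -- replace d by χ in the differences
  have hdiff : ∀ a b : Fin n, d a - d b = χ a - χ b := by
    intro a b; rw [hd]; ring
  -- collapse the double sum
  rw [show (∑ a : Fin n, ∑ b : Fin n,
      (d a - d b) * ((L : Matrix (Fin n) (Fin n) ℂ) a b * c a b))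
    = ∑ p ∈ Finset.univ ×ˢ Finset.univ,
      (χ p.1 - χ p.2) * ((L : Matrix (Fin n) (Fin n) ℂ) p.1 p.2 * c p.1 p.2) by
      rw [Finset.sum_product]
      exact Finset.sum_congr rfl fun a _ => Finset.sum_congr rfl fun b _ => by rw [hdiff]] at h0
  rw [Finset.sum_eq_single_of_mem (i, j) (Finset.mem_mk.mpr (by simp)) ?vanish] at h0
  case vanish =>
    rintro ⟨a, b⟩ hmem hne
    simp only
    by_cases hf : (L : Matrix (Fin n) (Fin n) ℂ) a b * c a b = 0
    · rw [hf, mul_zero]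
    · have hcab : c a b ≠ 0 := fun h => hf (by rw [h, mul_zero])
      have hlt : P.lt a b := hclt a b hcab
      have hadj : T.Adj a b := by
        rw [hTdef, SimpleGraph.fromRel_adj]
        refine ⟨hlt.2, Or.inl ⟨hlt, ?_⟩⟩
        have : Eelt a b = ⟨Matrix.single a b 1, stdBasisMatrix_mem_gA P hlt⟩ := by
          simp [hEelt, hlt]
        have hφ : φ (Eelt a b) ≠ 0 := hcab
        rw [this] at hφ
        exact hφ
      -- (a,b) ≠ (j,i)
      have hnji : ¬ (a = j ∧ b = i) := by
        rintro ⟨h1, h2⟩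
        rw [h1, h2] at hlt
        exact hij.2 (P.le_antisymm i j hij.1 hlt.1)
      have hedge : s(a, b) ≠ s(i, j) := by
        intro h
        rcases Sym2.eq_iff.mp h with ⟨rfl, rfl⟩ | ⟨rfl, rfl⟩
        · exact hne rfl
        · exact hnji ⟨rfl, rfl⟩
      have hadj' : G'.Adj a b := by
        rw [hG', SimpleGraph.deleteEdges_adj]
        exact ⟨hadj, by simpa using hedge⟩
      have hiff : a ∈ S ↔ b ∈ S := by
        simp only [hS, Finset.mem_filter, Finset.mem_univ, true_and]
        exact ⟨fun h => h.trans hadj'.reachable, fun h => h.trans hadj'.symm.reachable⟩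
      have : χ a = χ b := by
        show (if a ∈ S then (1:ℂ) else 0) = (if b ∈ S then (1:ℂ) else 0)
        by_cases h : a ∈ S
        · rw [if_pos h, if_pos (hiff.mp h)]
        · rw [if_neg h, if_neg (fun hb => h (hiff.mpr hb))]
      rw [this, sub_self, zero_mul]
  -- conclude
  have hχi : χ i = 1 := by
    show (if i ∈ S then (1:ℂ) else 0) = 1
    rw [if_pos hiS]
  have hχj : χ j = 0 := by
    show (if j ∈ S then (1:ℂ) else 0) = 0
    rw [if_neg hjS]
  rw [hχi, hχj, sub_zero, one_mul] at h0
  exact (mul_eq_zero.mp h0.symm).resolve_right hcij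
end

section
/- Let g be a complex Lie algebra of odd dimension 2k+1 and let φ ∈ g* be a contact form on g, i.e., det(\widehat{B}_φ) ≠ 0 with respect to some ordered basis of g. Then dim ker B_φ = 1; in particular, ind g = 1. -/
open Matrix

attribute [local instance 100] LieRing.ofAssociativeRing

lemma mem_kerB_iff {g : Type*} [LieRing g] [LieAlgebra ℂ g] (φ : Module.Dual ℂ g) (x : g) :
    x ∈ kerB φ ↔ ∀ y, φ ⁅x, y⁆ = 0 := Iff.rfl

/-- For any functional ψ on an odd-dimensional Lie algebra, `ker B_ψ` contains a
nonzero element (the Kirillov matrix is skew-symmetric of odd size, hence singular). -/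
lemma exists_ne_zero_mem_kerB {g : Type*} [LieRing g] [LieAlgebra ℂ g]
    (k : ℕ) (E : Module.Basis (Fin (2 * k + 1)) ℂ g) (ψ : Module.Dual ℂ g) :
    ∃ x : g, x ∈ kerB ψ ∧ x ≠ 0 := by
  set n := 2 * k + 1 with hn
  set M : Matrix (Fin n) (Fin n) ℂ := Matrix.of fun i j => ψ ⁅E i, E j⁆ with hM
  have hskew : Mᵀ = -M := by
    ext i j
    simp only [Matrix.transpose_apply, Matrix.neg_apply, hM, Matrix.of_apply]
    rw [← lie_skew (E j) (E i), map_neg]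
  have hdet : M.det = 0 := by
    have h1 := M.det_transpose
    rw [hskew, Matrix.det_neg] at h1
    have hcard : Fintype.card (Fin n) = 2 * k + 1 := by simp [hn]
    rw [hcard, Odd.neg_one_pow ⟨k, by ring⟩] at h1
    have : M.det + M.det = 0 := by linear_combination -h1
    exact add_self_eq_zero.mp this
  obtain ⟨v, hv0, hv⟩ := Matrix.exists_mulVec_eq_zero_iff.mpr hdet
  refine ⟨E.equivFun.symm v, ?_, ?_⟩
  · intro y
    have hmaps : ψ.comp (LieAlgebra.ad ℂ g (E.equivFun.symm v)) = 0 := by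
      apply E.ext
      intro j
      have hMv : (M *ᵥ v) j = 0 := by rw [hv]; rfl
      have hMv' : ∑ i, M j i * v i = 0 := by
        simpa [Matrix.mulVec, dotProduct] using hMv
      let L : g →ₗ[ℂ] ℂ :=
        { toFun := fun x => ψ ⁅x, E j⁆
          map_add' := fun a b => by simp [add_lie]
          map_smul' := fun c a => by simp [smul_lie] }
      have hLval : L (E.equivFun.symm v) = 0 := by
        rw [Module.Basis.equivFun_symm_apply, map_sum]
        have hterm : ∀ i, L (v i • E i) = -(M j i * v i) := by
          intro i
          have : L (v i • E i) = v i * ψ ⁅E i, E j⁆ := by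
            simp [L, smul_eq_mul]
          rw [this, ← lie_skew (E i) (E j), map_neg]
          simp only [hM, Matrix.of_apply]
          ring
        rw [Finset.sum_congr rfl fun i _ => hterm i]
        simp [hMv']
      have hLval' : ψ ⁅E.equivFun.symm v, E j⁆ = 0 := hLval
      simpa [sum_lie, smul_lie, map_sum] using hLval'
    have := congrArg (fun f => f y) hmaps
    simpa [sum_lie, smul_lie, map_sum] using this
  · intro h0
    apply hv0
    have h1 := congrArg E.equivFun h0
    rw [LinearEquiv.apply_symm_apply, map_zero] at h1
    exact h1

lemma finrank_kerB_pos {g : Type*} [LieRing g] [LieAlgebra ℂ g]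
    (k : ℕ) (E : Module.Basis (Fin (2 * k + 1)) ℂ g) (ψ : Module.Dual ℂ g) :
    0 < Module.finrank ℂ (kerB ψ) := by
  haveI : Module.Finite ℂ g := Module.Finite.of_basis E
  obtain ⟨x, hx, hx0⟩ := exists_ne_zero_mem_kerB k E ψ
  rw [Module.finrank_pos_iff]
  exact ⟨⟨x, hx⟩, 0, by simp [Subtype.ext_iff, hx0]⟩

/-- a contact form is regular: if `det \widehat{B}_φ ≠ 0` with respect to
some basis, then `dim ker B_φ = 1` and `ind g = 1`. -/
theorem stmt14 (g : Type) [LieRing g] [LieAlgebra ℂ g]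
    (k : ℕ) (E : Module.Basis (Fin (2 * k + 1)) ℂ g) (φ : Module.Dual ℂ g)
    (h : (hatB (⇑E) φ).det ≠ 0) :
    Module.finrank ℂ (kerB φ) = 1 ∧ lieIndex g = 1 := by
  haveI : Module.Finite ℂ g := Module.Finite.of_basis E
  -- the restriction of φ to kerB φ is injective
  have hinj : Function.Injective (φ.comp (Submodule.subtype (kerB φ))) := by
    rw [← LinearMap.ker_eq_bot, LinearMap.ker_eq_bot']
    rintro ⟨x, hx⟩ hφx
    have hφx' : φ x = 0 := hφx
    ext
    -- build the bordered kernel vector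
    set c : Fin (2 * k + 1) → ℂ := fun i => E.repr x i with hc
    set v : Fin (2 * k + 1 + 1) → ℂ := Fin.cons 0 c with hv
    have hxc : ∑ i, c i • E i = x := E.sum_repr x
    have hker : hatB (⇑E) φ *ᵥ v = 0 := by
      funext i
      refine Fin.cases ?_ ?_ i
      · show ∑ j, hatB (⇑E) φ 0 j * v j = 0
        rw [Fin.sum_univ_succ]
        simp only [hatB, Matrix.of_apply, Fin.cases_zero, Fin.cases_succ, hv,
          Fin.cons_zero, Fin.cons_succ, zero_mul, zero_add]
        have : ∀ j, φ (E j) * c j = φ (c j • E j) := by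
          intro j; rw [_root_.map_smul, smul_eq_mul]; ring
        rw [Finset.sum_congr rfl fun j _ => this j, ← map_sum, hxc, hφx']
      · intro i'
        show ∑ j, hatB (⇑E) φ i'.succ j * v j = 0
        rw [Fin.sum_univ_succ]
        simp only [hatB, Matrix.of_apply, Fin.cases_zero, Fin.cases_succ, hv,
          Fin.cons_zero, Fin.cons_succ, mul_zero, zero_add]
        have : ∀ j, φ ⁅E i', E j⁆ * c j = φ ⁅E i', c j • E j⁆ := by
          intro j; rw [lie_smul, _root_.map_smul, smul_eq_mul]; ring
        rw [Finset.sum_congr rfl fun j _ => this j, ← map_sum]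
        have hsum : (∑ j, ⁅E i', c j • E j⁆) = ⁅E i', ∑ j, c j • E j⁆ := by
          rw [← LieAlgebra.ad_apply (R := ℂ) (x := E i'), map_sum]
          simp [LieAlgebra.ad_apply]
        rw [hsum, hxc, ← lie_skew (E i') x, map_neg, hx (E i'), neg_zero]
    have hv0 : v = 0 := by
      by_contra hne
      exact h (Matrix.exists_mulVec_eq_zero_iff.mp ⟨v, hne, hker⟩)
    have hc0 : c = 0 := by
      funext j
      have := congrFun hv0 j.succ
      simpa [hv] using this
    have : E.repr x = 0 := by
      ext j; exact congrFun hc0 j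
    simpa using congrArg E.repr.symm this
  have hle : Module.finrank ℂ (kerB φ) ≤ 1 := by
    have := LinearMap.finrank_le_finrank_of_injective hinj
    simpa using this
  have hone : Module.finrank ℂ (kerB φ) = 1 :=
    le_antisymm hle (finrank_kerB_pos k E φ)
  refine ⟨hone, ?_⟩
  unfold lieIndex
  have hmem : 1 ∈ {d | ∃ ψ : Module.Dual ℂ g, Module.finrank ℂ (kerB ψ) = d} := ⟨φ, hone⟩
  refine le_antisymm (Nat.sInf_le hmem) ?_
  obtain ⟨ψ, hψ⟩ := Nat.sInf_mem ⟨1, hmem⟩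
  rw [← hψ]
  exact finrank_kerB_pos k E ψ
end
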